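/- arXiv:1909.10073 — 3 statements merged into one kernel-verified Lean document; each statement's English description precedes it below -/
import Mathlib

section
/- Let κ : ℝ^d × ℝ^d → ℂ be a measurable kernel and define κ̃(r,c) := κ(c - r/2, c + r/2) (i.e. κ(x,y) with r = y - x, c = (x+y)/2). Then for any s ≥ 2, the mixed norm ‖κ‖_{L^s_x L^2_y} := ‖ ‖κ(x,·)‖_{L^2} ‖_{L^s_x} satisfies ‖κ‖_{L^s_x L^2_y} ≤ ‖κ̃‖_{L^2_r L^s_c}, where ‖κ̃‖_{L^2_r L^s_c} := ( ∫ ‖κ̃(r,·)‖_{L^s}^2 dr )^{1/2}. -/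
open MeasureTheory
open scoped ENNReal

section Minkowski

variable {α β : Type*} [MeasurableSpace α] [MeasurableSpace β]

private lemma iSup_rpow_seq (f : ℕ → ℝ≥0∞) {c : ℝ} (hc : 0 < c) :
    (⨆ n, f n) ^ c = ⨆ n, f n ^ c :=
  Monotone.map_iSup_of_continuousAt (ENNReal.continuous_rpow_const.continuousAt)
    (fun _ _ hab => ENNReal.rpow_le_rpow hab hc.le)
    (by simpa using ENNReal.zero_rpow_of_pos hc)

private lemma coe_nnnorm_toReal_le (a : ℝ≥0∞) : (‖a.toReal‖₊ : ℝ≥0∞) ≤ a :=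
  (Real.enorm_eq_ofReal ENNReal.toReal_nonneg).trans_le ENNReal.ofReal_toReal_le

/-- Minkowski's integral inequality, core case: the outer integral is finite
and the exponent is in `(1, ∞)`. -/
private lemma minkowski_aux {μ : Measure α} {ν : Measure β} [SFinite μ] [SFinite ν]
    {g : β → α → ℝ≥0∞} (hg : Measurable (Function.uncurry g)) {p q : ℝ}
    (hpq : p.HolderConjugate q)
    (hA : ∫⁻ x, (∫⁻ r, g r x ∂ν) ^ p ∂μ ≠ ∞) :
    (∫⁻ x, (∫⁻ r, g r x ∂ν) ^ p ∂μ) ^ (1/p) ≤ ∫⁻ r, (∫⁻ x, g r x ^ p ∂μ) ^ (1/p) ∂ν := by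
  have hFm : Measurable fun x => ∫⁻ r, g r x ∂ν := hg.lintegral_prod_left'
  set F : α → ℝ≥0∞ := fun x => ∫⁻ r, g r x ∂ν with hFdef
  set A := ∫⁻ x, F x ^ p ∂μ with hAdef
  set B := ∫⁻ r, (∫⁻ x, g r x ^ p ∂μ) ^ (1/p) ∂ν with hBdef
  have hp1 : (1:ℝ) < p := hpq.lt
  rcases eq_or_ne A 0 with h0 | h0
  · rw [h0, ENNReal.zero_rpow_of_pos (by positivity)]
    exact zero_le
  · have key : A ≤ A ^ (1/q) * B := by
      have h1 : ∀ x, F x ^ p = F x ^ (p-1) * F x := fun x => by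
        have h := ENNReal.rpow_add_of_nonneg (x := F x) (p-1) 1 (by linarith) zero_le_one
        rw [sub_add_cancel] at h
        rw [h, ENNReal.rpow_one]
      calc A = ∫⁻ x, F x ^ (p-1) * F x ∂μ := lintegral_congr h1
        _ = ∫⁻ x, ∫⁻ r, F x ^ (p-1) * g r x ∂ν ∂μ := by
            refine lintegral_congr fun x => ?_
            have hmeas : Measurable fun r => g r x := hg.comp measurable_prodMk_right
            exact (lintegral_const_mul (F x ^ (p-1)) hmeas).symm
        _ = ∫⁻ r, ∫⁻ x, F x ^ (p-1) * g r x ∂μ ∂ν := by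
            refine lintegral_lintegral_swap ?_
            exact (((hFm.comp measurable_fst).pow_const _).mul
              (hg.comp measurable_swap)).aemeasurable
        _ ≤ ∫⁻ r, (∫⁻ x, (F x ^ (p-1)) ^ q ∂μ) ^ (1/q) * (∫⁻ x, g r x ^ p ∂μ) ^ (1/p) ∂ν := by
            refine lintegral_mono fun r => ?_
            have hgr : Measurable (g r) := hg.comp measurable_prodMk_left
            exact ENNReal.lintegral_mul_le_Lp_mul_Lq μ hpq.symm
              ((hFm.pow_const _).aemeasurable) hgr.aemeasurable
        _ = A ^ (1/q) * B := by
            have h2 : ∀ x, (F x ^ (p-1)) ^ q = F x ^ p := fun x => by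
              rw [← ENNReal.rpow_mul, hpq.sub_one_mul_conj]
            simp_rw [h2]
            rw [← hAdef, lintegral_const_mul' _ _
              (ENNReal.rpow_ne_top_of_nonneg (one_div_pos.mpr hpq.symm.pos).le hA)]
    have hq0 : A ^ (1/q) ≠ 0 := by
      simp only [ne_eq, ENNReal.rpow_eq_zero_iff, not_or, not_and]
      constructor
      · intro h; exact absurd h h0
      · intro h; exact absurd h hA
    have htop : A ^ (1/q) ≠ ∞ :=
      ENNReal.rpow_ne_top_of_nonneg (one_div_pos.mpr hpq.symm.pos).le hA
    rw [← ENNReal.mul_le_mul_iff_left hq0 htop, ← ENNReal.rpow_add_of_nonneg _ _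
      (one_div_pos.mpr hpq.pos).le (one_div_pos.mpr hpq.symm.pos).le]
    have hsum : 1/p + 1/q = 1 := by
      rw [one_div, one_div]; exact hpq.inv_add_inv_eq_one
    rw [hsum, ENNReal.rpow_one]
    calc A ≤ A ^ (1/q) * B := key
      _ = B * A ^ (1/q) := mul_comm _ _

/-- Minkowski's integral inequality for `ℝ≥0∞`-valued functions and `1 ≤ p`. -/
private lemma minkowski_lintegral {μ : Measure α} {ν : Measure β} [SigmaFinite μ]
    [SigmaFinite ν] {g : β → α → ℝ≥0∞} (hg : Measurable (Function.uncurry g)) {p : ℝ}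
    (hp : 1 ≤ p) :
    (∫⁻ x, (∫⁻ r, g r x ∂ν) ^ p ∂μ) ^ (1/p) ≤ ∫⁻ r, (∫⁻ x, g r x ^ p ∂μ) ^ (1/p) ∂ν := by
  rcases eq_or_lt_of_le hp with rfl | hp1
  · simp only [ENNReal.rpow_one, ne_eq, one_ne_zero, not_false_eq_true, div_self]
    exact le_of_eq (lintegral_lintegral_swap ((hg.comp measurable_swap).aemeasurable))
  · have hpq : p.HolderConjugate p.conjExponent := .conjExponent hp1
    have hp0 : (0:ℝ) < p := hpq.pos
    set T := spanningSets ν with hT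
    set S := spanningSets μ with hS
    set G : ℕ → β → α → ℝ≥0∞ := fun n r x =>
      (T n ×ˢ S n).indicator (fun z => min (Function.uncurry g z) n) (r, x) with hGdef
    have hGm : ∀ n, Measurable (Function.uncurry (G n)) := fun n =>
      (hg.min measurable_const).indicator
        ((measurableSet_spanningSets ν n).prod (measurableSet_spanningSets μ n))
    have hGle : ∀ n r x, G n r x ≤ g r x := by
      intro n r x
      by_cases h : (r, x) ∈ T n ×ˢ S n
      · simpa [hGdef, Set.indicator_of_mem h] using min_le_left _ _
      · simp [hGdef, Set.indicator_of_notMem h]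
    have hGmono : ∀ r x, Monotone fun n => G n r x := by
      intro r x m n hmn
      by_cases h : (r, x) ∈ T m ×ˢ S m
      · have h2 : (r, x) ∈ T n ×ˢ S n :=
          ⟨monotone_spanningSets ν hmn h.1, monotone_spanningSets μ hmn h.2⟩
        simp only [hGdef, Set.indicator_of_mem h, Set.indicator_of_mem h2]
        exact min_le_min le_rfl (Nat.cast_le.mpr hmn)
      · simp [hGdef, Set.indicator_of_notMem h]
    have hGsup : ∀ r x, (⨆ n, G n r x) = g r x := by
      intro r x
      refine le_antisymm (iSup_le fun n => hGle n r x) ?_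
      obtain ⟨n₀, hr₀, hx₀⟩ : ∃ n, r ∈ T n ∧ x ∈ S n :=
        ((eventually_mem_spanningSets ν r).and (eventually_mem_spanningSets μ x)).exists
      have step : ∀ n : ℕ, min (g r x) n ≤ ⨆ m, G m r x := by
        intro n
        have hmem : (r, x) ∈ T (max n₀ n) ×ˢ S (max n₀ n) :=
          ⟨monotone_spanningSets ν (le_max_left _ _) hr₀,
           monotone_spanningSets μ (le_max_left _ _) hx₀⟩
        have hval : G (max n₀ n) r x = min (g r x) (max n₀ n : ℕ) := by
          simp [hGdef, Set.indicator_of_mem hmem, Function.uncurry]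
        calc min (g r x) n ≤ min (g r x) ((max n₀ n : ℕ) : ℝ≥0∞) :=
              min_le_min le_rfl (Nat.cast_le.mpr (le_max_right _ _))
          _ = G (max n₀ n) r x := hval.symm
          _ ≤ ⨆ m, G m r x := le_iSup (fun m => G m r x) (max n₀ n)
      rcases eq_or_ne (g r x) ∞ with htop | hfin
      · calc g r x = ⨆ n : ℕ, (n : ℝ≥0∞) := by rw [htop, ENNReal.iSup_natCast]
          _ ≤ ⨆ m, G m r x := iSup_le fun n => le_trans (by simp [htop]) (step n)
      · obtain ⟨n, hn⟩ := ENNReal.exists_nat_gt hfin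
        have h := step n
        rwa [min_eq_left hn.le] at h
    -- finiteness for truncations
    have hAn : ∀ n, ∫⁻ x, (∫⁻ r, G n r x ∂ν) ^ p ∂μ ≠ ∞ := by
      intro n
      have hC : ∀ x, (∫⁻ r, G n r x ∂ν) ≤
          (S n).indicator (fun _ => (n : ℝ≥0∞) * ν (T n)) x := by
        intro x
        by_cases hx : x ∈ S n
        · rw [Set.indicator_of_mem hx]
          calc ∫⁻ r, G n r x ∂ν ≤ ∫⁻ r, (T n).indicator (fun _ => (n:ℝ≥0∞)) r ∂ν := by
                refine lintegral_mono fun r => ?_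
                by_cases hr : r ∈ T n
                · rw [Set.indicator_of_mem hr]
                  by_cases hrx : (r, x) ∈ T n ×ˢ S n
                  · simpa [hGdef, Set.indicator_of_mem hrx] using
                      min_le_right (Function.uncurry g (r, x)) ((n : ℝ≥0∞))
                  · simp [hGdef, Set.indicator_of_notMem hrx]
                · have hrx : (r, x) ∉ T n ×ˢ S n := fun h => hr h.1
                  simp [hGdef, Set.indicator_of_notMem hrx, Set.indicator_of_notMem hr]
            _ = (n:ℝ≥0∞) * ν (T n) :=
                lintegral_indicator_const (measurableSet_spanningSets ν n) _
        · rw [Set.indicator_of_notMem hx]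
          have h0 : ∀ r, G n r x = 0 := by
            intro r
            have hrx : (r, x) ∉ T n ×ˢ S n := fun h => hx h.2
            simp [hGdef, Set.indicator_of_notMem hrx]
          simp [h0]
      have hfin : ((n:ℝ≥0∞) * ν (T n)) ^ p * μ (S n) < ∞ :=
        ENNReal.mul_lt_top
          (ENNReal.rpow_lt_top_of_nonneg hp0.le
            (ENNReal.mul_lt_top (ENNReal.natCast_lt_top n)
              (measure_spanningSets_lt_top ν n)).ne)
          (measure_spanningSets_lt_top μ n)
      refine ne_of_lt (lt_of_le_of_lt ?_ hfin)
      calc ∫⁻ x, (∫⁻ r, G n r x ∂ν) ^ p ∂μ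
          ≤ ∫⁻ x, (S n).indicator (fun _ => ((n:ℝ≥0∞) * ν (T n)) ^ p) x ∂μ := by
            refine lintegral_mono fun x => ?_
            by_cases hx : x ∈ S n
            · rw [Set.indicator_of_mem hx]
              have := hC x
              rw [Set.indicator_of_mem hx] at this
              exact ENNReal.rpow_le_rpow this hp0.le
            · rw [Set.indicator_of_notMem hx]
              have := hC x
              rw [Set.indicator_of_notMem hx] at this
              have h0 : (∫⁻ r, G n r x ∂ν) = 0 := le_antisymm this zero_le
              rw [h0, ENNReal.zero_rpow_of_pos hp0]
        _ = ((n:ℝ≥0∞) * ν (T n)) ^ p * μ (S n) :=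
            lintegral_indicator_const (measurableSet_spanningSets μ n) _
    set B := ∫⁻ r, (∫⁻ x, g r x ^ p ∂μ) ^ (1/p) ∂ν with hBdef
    have hmain : ∀ n, (∫⁻ x, (∫⁻ r, G n r x ∂ν) ^ p ∂μ) ≤ B ^ p := by
      intro n
      have h1 := minkowski_aux (hGm n) hpq (hAn n)
      have h2 : ∫⁻ r, (∫⁻ x, G n r x ^ p ∂μ) ^ (1/p) ∂ν ≤ B :=
        lintegral_mono fun r => ENNReal.rpow_le_rpow
          (lintegral_mono fun x => ENNReal.rpow_le_rpow (hGle n r x) hp0.le)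
          (by positivity)
      have h3 := le_trans h1 h2
      calc (∫⁻ x, (∫⁻ r, G n r x ∂ν) ^ p ∂μ)
          = ((∫⁻ x, (∫⁻ r, G n r x ∂ν) ^ p ∂μ) ^ (1/p)) ^ p := by
            rw [← ENNReal.rpow_mul, one_div, inv_mul_cancel₀ hp0.ne', ENNReal.rpow_one]
        _ ≤ B ^ p := ENNReal.rpow_le_rpow h3 hp0.le
    have hswap : ∀ x, (∫⁻ r, g r x ∂ν) = ⨆ n, ∫⁻ r, G n r x ∂ν := by
      intro x
      have hmeas : ∀ n, Measurable fun r => G n r x := fun n =>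
        (hGm n).comp measurable_prodMk_right
      calc ∫⁻ r, g r x ∂ν = ∫⁻ r, ⨆ n, G n r x ∂ν :=
            lintegral_congr fun r => (hGsup r x).symm
        _ = ⨆ n, ∫⁻ r, G n r x ∂ν :=
            lintegral_iSup hmeas (fun m n hmn r => hGmono r x hmn)
    have hAsup : (∫⁻ x, (∫⁻ r, g r x ∂ν) ^ p ∂μ)
        = ⨆ n, ∫⁻ x, (∫⁻ r, G n r x ∂ν) ^ p ∂μ := by
      have hpt : ∀ x, (∫⁻ r, g r x ∂ν) ^ p = ⨆ n, (∫⁻ r, G n r x ∂ν) ^ p := fun x => by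
        rw [hswap x, iSup_rpow_seq _ hp0]
      simp_rw [hpt]
      refine lintegral_iSup (fun n => ((hGm n).lintegral_prod_left').pow_const p) ?_
      intro m n hmn x
      exact ENNReal.rpow_le_rpow (lintegral_mono fun r => hGmono r x hmn) hp0.le
    rw [hAsup]
    have hle : (⨆ n, ∫⁻ x, (∫⁻ r, G n r x ∂ν) ^ p ∂μ) ≤ B ^ p := iSup_le hmain
    calc (⨆ n, ∫⁻ x, (∫⁻ r, G n r x ∂ν) ^ p ∂μ) ^ (1/p)
        ≤ (B ^ p) ^ (1/p) := ENNReal.rpow_le_rpow hle (by positivity)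
      _ = B := by rw [← ENNReal.rpow_mul, mul_one_div, div_self hp0.ne', ENNReal.rpow_one]

/-- Minkowski's integral inequality, `p = ∞` version (as an a.e. bound). -/
private lemma minkowski_top {μ : Measure α} {ν : Measure β} [SigmaFinite μ] [SFinite ν]
    {g : β → α → ℝ≥0∞} (hg : Measurable (Function.uncurry g)) {h : β → ℝ≥0∞}
    (hh : ∀ r, ∀ᵐ x ∂μ, g r x ≤ h r) :
    ∀ᵐ x ∂μ, (∫⁻ r, g r x ∂ν) ≤ ∫⁻ r, h r ∂ν := by
  refine ae_le_of_forall_setLIntegral_le_of_sigmaFinite hg.lintegral_prod_left' ?_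
  intro A hA hAfin
  calc ∫⁻ x in A, ∫⁻ r, g r x ∂ν ∂μ
      = ∫⁻ r, ∫⁻ x in A, g r x ∂μ ∂ν :=
        lintegral_lintegral_swap ((hg.comp measurable_swap).aemeasurable)
    _ ≤ ∫⁻ r, h r * μ A ∂ν := by
        refine lintegral_mono fun r => ?_
        calc ∫⁻ x in A, g r x ∂μ ≤ ∫⁻ _ in A, h r ∂μ :=
              lintegral_mono_ae (ae_restrict_of_ae (hh r))
          _ = h r * μ A := setLIntegral_const A (h r)
    _ = (∫⁻ r, h r ∂ν) * μ A := lintegral_mul_const' _ _ hAfin.ne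
    _ = ∫⁻ _ in A, (∫⁻ r, h r ∂ν) ∂μ := (setLIntegral_const A _).symm

end Minkowski

/-- Mixed-norm inequality `‖κ‖_{L^s_x L^2_y} ≤ ‖κ̃‖_{L^2_r L^s_c}` where
`κ̃(r,c) = κ(c - r/2, c + r/2)`. -/
theorem stmt_1 (d : ℕ) (κ : EuclideanSpace ℝ (Fin d) → EuclideanSpace ℝ (Fin d) → ℂ)
    (hκ : Measurable (Function.uncurry κ)) (s : ℝ≥0∞) (hs : 2 ≤ s) :
    eLpNorm (fun x => (eLpNorm (fun y => κ x y) 2 volume).toReal) s volume ≤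
      (∫⁻ r, (eLpNorm (fun c => κ (c - (2:ℝ)⁻¹ • r) (c + (2:ℝ)⁻¹ • r)) s volume) ^ 2) ^
        (1/2 : ℝ) := by
  classical
  have hs0 : s ≠ 0 := by
    intro h; rw [h] at hs; exact absurd hs (by simp)
  set g : (EuclideanSpace ℝ (Fin d)) → (EuclideanSpace ℝ (Fin d)) → ℝ≥0∞ := fun r x => (‖κ x (x + r)‖₊ : ℝ≥0∞) ^ (2:ℝ) with hgdef
  have hgm : Measurable (Function.uncurry g) := by
    have hmeas : Measurable fun z : (EuclideanSpace ℝ (Fin d)) × (EuclideanSpace ℝ (Fin d)) => κ z.2 (z.2 + z.1) :=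
      hκ.comp (measurable_snd.prodMk (measurable_snd.add measurable_fst))
    exact hmeas.nnnorm.coe_nnreal_ennreal.pow_const _
  have hFrm : ∀ r : (EuclideanSpace ℝ (Fin d)), Measurable fun x => κ x (x + r) := fun r =>
    hκ.comp (measurable_id.prodMk (measurable_id.add_const r))
  -- translation invariance in the inner variable
  have factA : ∀ x : (EuclideanSpace ℝ (Fin d)), eLpNorm (fun y => κ x y) 2 volume
      = (∫⁻ r, g r x ∂volume) ^ (1/2 : ℝ) := by
    intro x
    rw [eLpNorm_eq_lintegral_rpow_enorm_toReal two_ne_zero ENNReal.ofNat_ne_top]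
    simp only [ENNReal.toReal_ofNat]
    congr 1
    exact (lintegral_add_left_eq_self
      (fun y => (‖κ x y‖₊ : ℝ≥0∞) ^ (2:ℝ)) x).symm
  -- translation invariance in the outer variable
  have hB : ∀ r : (EuclideanSpace ℝ (Fin d)), eLpNorm (fun c => κ (c - (2:ℝ)⁻¹ • r) (c + (2:ℝ)⁻¹ • r)) s volume
      = eLpNorm (fun x => κ x (x + r)) s volume := by
    intro r
    have hhalf : (2:ℝ)⁻¹ • r + (2:ℝ)⁻¹ • r = r := by
      rw [← add_smul]; norm_num
    have hfun : (fun c => κ (c - (2:ℝ)⁻¹ • r) (c + (2:ℝ)⁻¹ • r))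
        = (fun x => κ x (x + r)) ∘ (fun c => c + (-((2:ℝ)⁻¹ • r))) := by
      funext c
      simp only [Function.comp_apply, ← sub_eq_add_neg]
      congr 1
      have harith : c - (2:ℝ)⁻¹ • r + r = c + (2:ℝ)⁻¹ • r := by
        calc c - (2:ℝ)⁻¹ • r + r
            = c - (2:ℝ)⁻¹ • r + ((2:ℝ)⁻¹ • r + (2:ℝ)⁻¹ • r) := by rw [hhalf]
          _ = c + (2:ℝ)⁻¹ • r := by abel
      exact harith.symm
    rw [hfun]
    exact eLpNorm_comp_measurePreserving ((hFrm r).aestronglyMeasurable)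
      (measurePreserving_add_right volume _)
  rcases eq_or_ne s ∞ with rfl | hstop
  · -- case s = ∞
    rw [eLpNorm_exponent_top]
    have hh : ∀ r : (EuclideanSpace ℝ (Fin d)), ∀ᵐ x ∂(volume : Measure (EuclideanSpace ℝ (Fin d))),
        g r x ≤ (eLpNorm (fun x => κ x (x + r)) ⊤ volume) ^ (2:ℝ) := by
      intro r
      filter_upwards [ae_le_eLpNormEssSup (f := fun x : (EuclideanSpace ℝ (Fin d)) => κ x (x + r))
        (μ := (volume : Measure (EuclideanSpace ℝ (Fin d))))] with x hx
      rw [eLpNorm_exponent_top]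
      exact ENNReal.rpow_le_rpow hx (by norm_num)
    have hmt := minkowski_top (ν := (volume : Measure (EuclideanSpace ℝ (Fin d)))) hgm hh
    refine essSup_le_of_ae_le _ ?_
    filter_upwards [hmt] with x hx
    calc (‖(eLpNorm (fun y => κ x y) 2 volume).toReal‖₊ : ℝ≥0∞)
        ≤ eLpNorm (fun y => κ x y) 2 volume := coe_nnnorm_toReal_le _
      _ = (∫⁻ r, g r x ∂volume) ^ (1/2 : ℝ) := factA x
      _ ≤ (∫⁻ r, (eLpNorm (fun x => κ x (x + r)) ⊤ volume) ^ (2:ℝ) ∂volume) ^ (1/2 : ℝ) :=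
          ENNReal.rpow_le_rpow hx (by norm_num)
      _ = (∫⁻ r, (eLpNorm (fun c => κ (c - (2:ℝ)⁻¹ • r) (c + (2:ℝ)⁻¹ • r)) ⊤ volume) ^ 2) ^
            (1/2 : ℝ) := by
          congr 1
          refine lintegral_congr fun r => ?_
          rw [hB r, ← ENNReal.rpow_natCast _ 2]
          norm_num
  · -- case s < ∞
    have hτ : 2 ≤ s.toReal := by
      have := ENNReal.toReal_mono hstop hs
      simpa using this
    set τ := s.toReal with hτdef
    have hτ0 : (0:ℝ) < τ := by linarith
    set p := τ / 2 with hpdef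
    have hp1 : (1:ℝ) ≤ p := by rw [hpdef]; linarith
    have hp0 : (0:ℝ) < p := by linarith
    have hmk := minkowski_lintegral (μ := (volume : Measure (EuclideanSpace ℝ (Fin d))))
      (ν := (volume : Measure (EuclideanSpace ℝ (Fin d)))) hgm hp1
    rw [eLpNorm_eq_lintegral_rpow_enorm_toReal hs0 hstop]
    calc (∫⁻ x, (‖(eLpNorm (fun y => κ x y) 2 volume).toReal‖₊ : ℝ≥0∞) ^ τ ∂volume) ^ (1/τ)
        ≤ (∫⁻ x, (∫⁻ r, g r x ∂volume) ^ p ∂volume) ^ (1/τ) := by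
          refine ENNReal.rpow_le_rpow (lintegral_mono fun x => ?_) (by positivity)
          calc (‖(eLpNorm (fun y => κ x y) 2 volume).toReal‖₊ : ℝ≥0∞) ^ τ
              ≤ (eLpNorm (fun y => κ x y) 2 volume) ^ τ :=
                ENNReal.rpow_le_rpow (coe_nnnorm_toReal_le _) hτ0.le
            _ = ((∫⁻ r, g r x ∂volume) ^ (1/2:ℝ)) ^ τ := by rw [factA x]
            _ = (∫⁻ r, g r x ∂volume) ^ p := by
                rw [← ENNReal.rpow_mul, hpdef]; norm_num; ring_nf
      _ = ((∫⁻ x, (∫⁻ r, g r x ∂volume) ^ p ∂volume) ^ (1/p)) ^ (1/2 : ℝ) := by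
          rw [← ENNReal.rpow_mul]
          congr 1
          rw [hpdef]
          field_simp
      _ ≤ (∫⁻ r, (∫⁻ x, g r x ^ p ∂volume) ^ (1/p) ∂volume) ^ (1/2 : ℝ) :=
          ENNReal.rpow_le_rpow hmk (by norm_num)
      _ = (∫⁻ r, (eLpNorm (fun c => κ (c - (2:ℝ)⁻¹ • r) (c + (2:ℝ)⁻¹ • r)) s volume) ^ 2) ^
            (1/2 : ℝ) := by
          congr 1
          refine lintegral_congr fun r => ?_
          rw [hB r, eLpNorm_eq_lintegral_rpow_enorm_toReal hs0 hstop, ← hτdef,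
            ← ENNReal.rpow_natCast _ 2, ← ENNReal.rpow_mul]
          have h1 : (1/τ) * ((2:ℕ):ℝ) = 1/p := by
            rw [hpdef]; push_cast; field_simp
          rw [h1]
          congr 1
          refine lintegral_congr fun x => ?_
          rw [hgdef]
          dsimp only
          rw [← ENNReal.rpow_mul]
          congr 1
          rw [hpdef]; ring
end

section
/- Let κ, κ' be Hilbert–Schmidt operators on L^2(ℝ^d) with kernels κ(x,y), κ'(x,y), and define the density of their product ρ(κκ')(x) := ∫ κ(x,y) κ'(y,x) dy. If 1/w + 1/w' = 1/q with q, w, w' ∈ [1,∞], then ‖ρ(κκ')‖_{L^q} ≤ ∫ ‖κ̃(-r,·)‖_{L^w_c} ‖κ̃'(r,·)‖_{L^{w'}_c} dr ≤ ‖κ‖_{L^2_r L^w_c} ‖κ'‖_{L^2_r L^{w'}_c}. -/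
open MeasureTheory
open scoped ENNReal

section AuxiliaryLemmas

variable {α β : Type*} [MeasurableSpace α] [MeasurableSpace β]

private lemma essSup_eq_iInf_rat (μ : Measure α) (g : α → ℝ≥0∞) :
    essSup g μ = ⨅ (t : ℚ), (if μ {x | ENNReal.ofReal t < g x} = 0
      then ENNReal.ofReal t else ∞) := by
  apply le_antisymm
  · refine le_iInf fun t => ?_
    split_ifs with h
    · refine essSup_le_of_ae_le _ ?_
      have : ∀ᵐ x ∂μ, ¬ (ENNReal.ofReal t < g x) := by
        rw [ae_iff]; simpa using h
      filter_upwards [this] with x hx using not_lt.mp hx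
    · exact le_top
  · set s := essSup g μ with hs
    rcases eq_or_ne s ∞ with h | h
    · simp [h]
    refine ENNReal.le_of_forall_pos_le_add fun ε hε hlt => ?_
    obtain ⟨t, ht1, ht2⟩ := exists_rat_btwn (lt_add_of_pos_right s.toReal
      (by exact_mod_cast hε : (0:ℝ) < ε))
    have hts : s ≤ ENNReal.ofReal t := by
      rw [← ENNReal.ofReal_toReal h]
      exact ENNReal.ofReal_le_ofReal ht1.le
    have hnull : μ {x | ENNReal.ofReal t < g x} = 0 := by
      have hae := ae_le_essSup (μ := μ) (f := g)
      have : ∀ᵐ x ∂μ, ¬ (ENNReal.ofReal t < g x) := by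
        filter_upwards [hae] with x hx using not_lt.mpr (hx.trans hts)
      simpa [ae_iff] using this
    calc ⨅ (t : ℚ), (if μ {x | ENNReal.ofReal t < g x} = 0 then ENNReal.ofReal t else ∞)
        ≤ ENNReal.ofReal t := by
          refine (iInf_le _ t).trans ?_
          rw [if_pos hnull]
      _ ≤ ENNReal.ofReal (s.toReal + ε) := ENNReal.ofReal_le_ofReal ht2.le
      _ ≤ s + ε := by
          rw [ENNReal.ofReal_add ENNReal.toReal_nonneg (by positivity),
            ENNReal.ofReal_toReal h, ENNReal.ofReal_coe_nnreal]

private lemma measurable_essSup_param (μ : Measure α) [SFinite μ] {f : α → β → ℝ≥0∞}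
    (hf : Measurable (Function.uncurry f)) :
    Measurable (fun y => essSup (fun x => f x y) μ) := by
  simp_rw [essSup_eq_iInf_rat]
  refine Measurable.iInf fun t => ?_
  have hS : MeasurableSet {p : α × β | ENNReal.ofReal t < f p.1 p.2} :=
    measurableSet_lt measurable_const hf
  have hm : Measurable fun y =>
      μ ((fun x => (x, y)) ⁻¹' {p : α × β | ENNReal.ofReal t < f p.1 p.2}) :=
    measurable_measure_prodMk_right hS
  have : Measurable fun y => μ {x | ENNReal.ofReal t < f x y} := hm
  exact Measurable.ite (this (measurableSet_singleton 0)) measurable_const measurable_const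

/-- **Minkowski's integral inequality** for `ℝ≥0∞`-valued functions. -/
private lemma lintegral_minkowski (μ : Measure α) (ν : Measure β) [SigmaFinite μ] [SFinite ν]
    {p : ℝ} (hp : 1 ≤ p) {f : α → β → ℝ≥0∞} (hf : Measurable (Function.uncurry f)) :
    (∫⁻ x, (∫⁻ y, f x y ∂ν) ^ p ∂μ) ^ (1/p) ≤ ∫⁻ y, (∫⁻ x, f x y ^ p ∂μ) ^ (1/p) ∂ν := by
  have hfx : ∀ x, Measurable (f x) := fun x => hf.comp measurable_prodMk_left
  have hfy : ∀ y, Measurable (fun x => f x y) := fun y => hf.comp measurable_prodMk_right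
  rcases eq_or_lt_of_le hp with hp1 | hp1
  · subst hp1
    simp only [ENNReal.rpow_one, one_div_one]
    exact le_of_eq (lintegral_lintegral_swap hf.aemeasurable)
  set F : α → ℝ≥0∞ := fun x => ∫⁻ y, f x y ∂ν with hF
  have hFm : Measurable F := Measurable.lintegral_prod_right hf
  set R : ℝ≥0∞ := ∫⁻ y, (∫⁻ x, f x y ^ p ∂μ) ^ (1/p) ∂ν with hR
  have hRm : Measurable fun y => (∫⁻ x, f x y ^ p ∂μ) ^ (1/p) :=
    (Measurable.lintegral_prod_right ((hf.comp measurable_swap).pow_const _)).pow_const _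
  rcases eq_or_ne R ∞ with hRtop | hRtop
  · rw [hRtop]; exact le_top
  have hp0 : (0:ℝ) < p := lt_trans one_pos hp1
  set p' : ℝ := p / (p - 1) with hp'
  have hconj : p'.HolderConjugate p :=
    ((Real.holderConjugate_iff_eq_conjExponent hp1).mpr rfl).symm
  have hsum : 1/p + 1/p' = 1 := by
    have := hconj.inv_add_inv_eq_one
    rw [one_div, one_div]; linarith
  -- truncations
  set G : ℕ → α → ℝ≥0∞ := fun n => (spanningSets μ n).indicator (fun x => min (F x) n) with hG
  have hGm : ∀ n, Measurable (G n) :=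
    fun n => (hFm.min measurable_const).indicator (measurableSet_spanningSets μ n)
  have hGle : ∀ n x, G n x ≤ F x :=
    fun n x => Set.indicator_le (fun a _ => min_le_left _ _) x
  have hGlt : ∀ n x, G n x ≤ (n:ℝ≥0∞) :=
    fun n x => Set.indicator_le (fun a _ => min_le_right _ _) x
  have hGtop : ∀ n x, G n x ≠ ∞ :=
    fun n x => ((hGlt n x).trans_lt (ENNReal.natCast_lt_top n)).ne
  set I : ℕ → ℝ≥0∞ := fun n => ∫⁻ x, G n x ^ p ∂μ with hI
  have hIlt : ∀ n, I n < ∞ := by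
    intro n
    calc I n ≤ ∫⁻ x, (spanningSets μ n).indicator (fun _ => (n:ℝ≥0∞) ^ p) x ∂μ := by
          refine lintegral_mono fun x => ?_
          by_cases hx : x ∈ spanningSets μ n
          · rw [hG]
            simp only [Set.indicator_of_mem hx]
            exact ENNReal.rpow_le_rpow (min_le_right _ _) hp0.le
          · rw [hG]
            simp only [Set.indicator_of_notMem hx]
            rw [ENNReal.zero_rpow_of_pos hp0]
      _ = (n:ℝ≥0∞) ^ p * μ (spanningSets μ n) := by
          rw [lintegral_indicator (measurableSet_spanningSets μ n), setLIntegral_const]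
      _ < ∞ := ENNReal.mul_lt_top
          (ENNReal.rpow_lt_top_of_nonneg hp0.le (ENNReal.natCast_ne_top n))
          (measure_spanningSets_lt_top μ n)
  have key : ∀ n, I n ≤ I n ^ (1/p') * R := by
    intro n
    have step1 : I n ≤ ∫⁻ x, G n x ^ (p - 1) * F x ∂μ := by
      refine lintegral_mono fun x => ?_
      rcases eq_or_ne (G n x) 0 with h0 | h0
      · rw [h0, ENNReal.zero_rpow_of_pos hp0]; exact zero_le
      · calc G n x ^ p = G n x ^ (p - 1) * G n x := by
              conv_lhs => rw [show p = (p-1) + 1 by ring]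
              rw [ENNReal.rpow_add _ _ h0 (hGtop n x), ENNReal.rpow_one]
          _ ≤ G n x ^ (p - 1) * F x := mul_le_mul_right (hGle n x) _
    have step2 : ∫⁻ x, G n x ^ (p - 1) * F x ∂μ
        = ∫⁻ y, ∫⁻ x, G n x ^ (p - 1) * f x y ∂μ ∂ν := by
      rw [← lintegral_lintegral_swap]
      · exact lintegral_congr fun x => (lintegral_const_mul _ (hfx x)).symm
      · exact ((((hGm n).comp measurable_fst).pow_const _).mul hf).aemeasurable
    have step3 : ∀ y, ∫⁻ x, G n x ^ (p - 1) * f x y ∂μ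
        ≤ I n ^ (1/p') * (∫⁻ x, f x y ^ p ∂μ) ^ (1/p) := by
      intro y
      have hH := ENNReal.lintegral_mul_le_Lp_mul_Lq μ hconj
        (((hGm n).pow_const (p-1)).aemeasurable) ((hfy y).aemeasurable)
      refine le_trans (le_of_eq (by rfl)) (hH.trans (le_of_eq ?_))
      congr 1
      rw [hI]
      congr 1
      refine lintegral_congr fun x => ?_
      rw [← ENNReal.rpow_mul]
      congr 1
      rw [hp', mul_comm]
      exact div_mul_cancel₀ p (sub_ne_zero.mpr hp1.ne')
    calc I n ≤ ∫⁻ y, ∫⁻ x, G n x ^ (p - 1) * f x y ∂μ ∂ν := step1.trans (le_of_eq step2)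
      _ ≤ ∫⁻ y, I n ^ (1/p') * (∫⁻ x, f x y ^ p ∂μ) ^ (1/p) ∂ν := lintegral_mono step3
      _ = I n ^ (1/p') * R := lintegral_const_mul _ hRm
  have hInR : ∀ n, I n ≤ R ^ p := by
    intro n
    rcases eq_or_ne (I n) 0 with h0 | h0
    · rw [h0]; exact zero_le
    have hInt : I n ≠ ∞ := (hIlt n).ne
    have hcancel : I n ^ (1/p) * I n ^ (1/p') = I n := by
      rw [← ENNReal.rpow_add _ _ h0 hInt, hsum, ENNReal.rpow_one]
    have h2 : I n ^ (1/p) * I n ^ (1/p') ≤ R * I n ^ (1/p') := by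
      rw [hcancel, mul_comm]
      exact key n
    have hne0 : I n ^ (1/p') ≠ 0 :=
      (ENNReal.rpow_pos (pos_iff_ne_zero.mpr h0) hInt).ne'
    have hnetop : I n ^ (1/p') ≠ ∞ :=
      (ENNReal.rpow_lt_top_of_nonneg hconj.one_div_nonneg hInt).ne
    have hmain : I n ^ (1/p) ≤ R := (ENNReal.mul_le_mul_iff_left hne0 hnetop).mp h2
    calc I n = (I n ^ (1/p)) ^ p := by
          rw [← ENNReal.rpow_mul, one_div, inv_mul_cancel₀ hp0.ne', ENNReal.rpow_one]
      _ ≤ R ^ p := ENNReal.rpow_le_rpow hmain hp0.le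
  -- monotone convergence
  have hGmono : Monotone G := by
    intro m n hmn x
    by_cases hx : x ∈ spanningSets μ m
    · rw [hG]
      simp only [Set.indicator_of_mem hx,
        Set.indicator_of_mem (monotone_spanningSets μ hmn hx)]
      exact min_le_min le_rfl (Nat.cast_le.mpr hmn)
    · rw [hG]; simp only [Set.indicator_of_notMem hx]; exact zero_le
  have hGsup : ∀ x, ⨆ n, G n x = F x := by
    intro x
    refine le_antisymm (iSup_le fun n => hGle n x) ?_
    obtain ⟨N, hN⟩ : ∃ N, x ∈ spanningSets μ N := by
      have hx : x ∈ ⋃ n, spanningSets μ n := by rw [iUnion_spanningSets]; trivial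
      exact Set.mem_iUnion.mp hx
    rcases eq_or_ne (F x) ∞ with htop | htop
    · rw [htop, ← ENNReal.iSup_natCast]
      refine iSup_mono' fun n => ⟨max N n, ?_⟩
      have hmem : x ∈ spanningSets μ (max N n) := monotone_spanningSets μ (le_max_left N n) hN
      rw [hG]
      simp only [Set.indicator_of_mem hmem, htop]
      simp only [min_eq_right (le_top : ((max N n : ℕ):ℝ≥0∞) ≤ ⊤)]
      exact_mod_cast Nat.cast_le.mpr (le_max_right N n)
    · obtain ⟨n, hn⟩ := ENNReal.exists_nat_gt htop
      have hmem : x ∈ spanningSets μ (max N n) := monotone_spanningSets μ (le_max_left N n) hN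
      refine le_trans ?_ (le_iSup _ (max N n))
      rw [hG]
      simp only [Set.indicator_of_mem hmem]
      rw [min_eq_left]
      exact hn.le.trans (by exact_mod_cast Nat.cast_le.mpr (le_max_right N n))
  have hlim : ∫⁻ x, F x ^ p ∂μ = ⨆ n, I n := by
    rw [hI, ← lintegral_iSup (fun n => (hGm n).pow_const p)
      (fun m n hmn x => ENNReal.rpow_le_rpow (hGmono hmn x) hp0.le)]
    refine lintegral_congr fun x => ?_
    rw [← hGsup x]
    calc (⨆ n, G n x) ^ p = ENNReal.orderIsoRpow p hp0 (⨆ n, G n x) := by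
          rw [ENNReal.orderIsoRpow_apply]
      _ = ⨆ n, ENNReal.orderIsoRpow p hp0 (G n x) := map_iSup _ _
      _ = ⨆ n, G n x ^ p := by simp only [ENNReal.orderIsoRpow_apply]
  calc (∫⁻ x, F x ^ p ∂μ) ^ (1/p) = (⨆ n, I n) ^ (1/p) := by rw [hlim]
    _ ≤ (R ^ p) ^ (1/p) := ENNReal.rpow_le_rpow (iSup_le hInR) (by positivity)
    _ = R := by rw [← ENNReal.rpow_mul, mul_one_div, div_self hp0.ne', ENNReal.rpow_one]

/-- **Minkowski's integral inequality**, `p = ∞` version. -/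
private lemma essSup_lintegral_le (μ : Measure α) (ν : Measure β) [SFinite μ] [SFinite ν]
    {f : α → β → ℝ≥0∞} (hf : Measurable (Function.uncurry f)) :
    essSup (fun x => ∫⁻ y, f x y ∂ν) μ ≤ ∫⁻ y, essSup (fun x => f x y) μ ∂ν := by
  set g : β → ℝ≥0∞ := fun y => essSup (fun x => f x y) μ with hg
  have hgm : Measurable g := measurable_essSup_param μ hf
  set T : Set (β × α) := {p | g p.1 < f p.2 p.1} with hT
  have hTm : MeasurableSet T :=
    measurableSet_lt (hgm.comp measurable_fst) (hf.comp measurable_swap)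
  have hsec : ∀ y, μ {x | g y < f x y} = 0 := by
    intro y
    have hae := ae_le_essSup (μ := μ) (f := fun x => f x y)
    have : ∀ᵐ x ∂μ, ¬ (g y < f x y) := by
      filter_upwards [hae] with x hx using not_lt.mpr hx
    simpa [ae_iff] using this
  have hT0 : (ν.prod μ) T = 0 := by
    rw [Measure.measure_prod_null hTm]
    exact Filter.Eventually.of_forall fun y => hsec y
  have hS0 : (μ.prod ν) {p : α × β | g p.2 < f p.1 p.2} = 0 := by
    have heq : {p : α × β | g p.2 < f p.1 p.2} = Prod.swap ⁻¹' T := rfl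
    rw [heq, ← Measure.map_apply measurable_swap hTm, Measure.prod_swap, hT0]
  have hae2 : ∀ᵐ x ∂μ, ∀ᵐ y ∂ν, f x y ≤ g y := by
    have hprod : ∀ᵐ p ∂(μ.prod ν), f p.1 p.2 ≤ g p.2 := by
      rw [ae_iff]
      convert hS0 using 2
      ext p
      simp [not_le]
    exact Measure.ae_ae_of_ae_prod hprod
  refine essSup_le_of_ae_le _ ?_
  filter_upwards [hae2] with x hx
  exact lintegral_mono_ae hx

/-- Measurability of `eLpNorm` in a parameter. -/
private lemma measurable_eLpNorm_param (μ : Measure α) [SFinite μ] {f : α → β → ℂ}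
    (hf : Measurable (Function.uncurry f)) (p : ℝ≥0∞) :
    Measurable fun y => eLpNorm (fun x => f x y) p μ := by
  rcases eq_or_ne p 0 with rfl | hp0
  · simpa [eLpNorm_exponent_zero] using measurable_const
  rcases eq_or_ne p ∞ with rfl | hptop
  · simp only [eLpNorm_exponent_top, eLpNormEssSup]
    exact measurable_essSup_param μ (f := fun x y => (‖f x y‖₊ : ℝ≥0∞)) hf.enorm
  · simp_rw [eLpNorm_eq_lintegral_rpow_enorm_toReal hp0 hptop]
    refine Measurable.pow_const ?_ _
    refine Measurable.lintegral_prod_right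
      (f := fun y x => ((‖f x y‖₊ : ℝ≥0∞)) ^ p.toReal) ?_
    exact ((hf.comp measurable_swap).enorm).pow_const _

end AuxiliaryLemmas

/-- Estimate on the density of a product of Hilbert-Schmidt operators:
`‖ρ(κκ')‖_{L^q} ≤ ∫ ‖κ̃(-r,·)‖_{L^w_c} ‖κ̃'(r,·)‖_{L^{w'}_c} dr
  ≤ ‖κ‖_{L^2_r L^w_c} ‖κ'‖_{L^2_r L^{w'}_c}` when `1/w + 1/w' = 1/q`. -/
theorem stmt_2 (d : ℕ) (κ κ' : EuclideanSpace ℝ (Fin d) → EuclideanSpace ℝ (Fin d) → ℂ)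
    (hκ : Measurable (Function.uncurry κ)) (hκ' : Measurable (Function.uncurry κ'))
    (q w w' : ℝ≥0∞) (hq : 1 ≤ q) (hw : 1 ≤ w) (hw' : 1 ≤ w')
    (hqww' : 1 / w + 1 / w' = 1 / q) :
    eLpNorm (fun x => ∫ y, κ x y * κ' y x) q volume ≤
      ∫⁻ r, eLpNorm (fun c => κ (c + (2:ℝ)⁻¹ • r) (c - (2:ℝ)⁻¹ • r)) w volume *
        eLpNorm (fun c => κ' (c - (2:ℝ)⁻¹ • r) (c + (2:ℝ)⁻¹ • r)) w' volume ∧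
    (∫⁻ r, eLpNorm (fun c => κ (c + (2:ℝ)⁻¹ • r) (c - (2:ℝ)⁻¹ • r)) w volume *
        eLpNorm (fun c => κ' (c - (2:ℝ)⁻¹ • r) (c + (2:ℝ)⁻¹ • r)) w' volume) ≤
      (∫⁻ r, (eLpNorm (fun c => κ (c - (2:ℝ)⁻¹ • r) (c + (2:ℝ)⁻¹ • r)) w volume) ^ 2) ^
          (1/2 : ℝ) *
      (∫⁻ r, (eLpNorm (fun c => κ' (c - (2:ℝ)⁻¹ • r) (c + (2:ℝ)⁻¹ • r)) w' volume) ^ 2) ^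
          (1/2 : ℝ) := by
  have hq0 : q ≠ 0 := (lt_of_lt_of_le zero_lt_one hq).ne'
  -- measurability of slices
  have hm1 : ∀ r : EuclideanSpace ℝ (Fin d), Measurable fun x => κ x (x - r) := fun r =>
    hκ.comp (measurable_id.prodMk (measurable_id.sub measurable_const))
  have hm2 : ∀ r : EuclideanSpace ℝ (Fin d), Measurable fun x => κ' (x - r) x := fun r =>
    hκ'.comp ((measurable_id.sub measurable_const).prodMk measurable_id)
  -- Hölder + translation: the key per-`r` bound
  have hstep : ∀ r : EuclideanSpace ℝ (Fin d),
      eLpNorm (fun x => κ x (x - r) * κ' (x - r) x) q volume ≤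
      eLpNorm (fun c => κ (c + (2:ℝ)⁻¹ • r) (c - (2:ℝ)⁻¹ • r)) w volume *
      eLpNorm (fun c => κ' (c - (2:ℝ)⁻¹ • r) (c + (2:ℝ)⁻¹ • r)) w' volume := by
    intro r
    have hHolder : eLpNorm (fun x => κ x (x - r) * κ' (x - r) x) q volume ≤
        eLpNorm (fun x => κ x (x - r)) w volume * eLpNorm (fun x => κ' (x - r) x) w' volume := by
      haveI : ENNReal.HolderTriple w w' q := ⟨by simpa [one_div] using hqww'⟩
      have := eLpNorm_smul_le_mul_eLpNorm (μ := (volume : Measure (EuclideanSpace ℝ (Fin d))))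
        (hm2 r).aestronglyMeasurable (hm1 r).aestronglyMeasurable (p := w) (q := w') (r := q)
      exact this
    have ht : MeasurePreserving (fun c : EuclideanSpace ℝ (Fin d) => c + (2:ℝ)⁻¹ • r)
        volume volume := measurePreserving_add_right volume _
    have hsub : ∀ c : EuclideanSpace ℝ (Fin d),
        c + (2:ℝ)⁻¹ • r - r = c - (2:ℝ)⁻¹ • r := by
      intro c
      have h2 : (2:ℝ)⁻¹ • r + (2:ℝ)⁻¹ • r = r := by
        rw [← add_smul]; norm_num
      calc c + (2:ℝ)⁻¹ • r - r = c + (2:ℝ)⁻¹ • r - ((2:ℝ)⁻¹ • r + (2:ℝ)⁻¹ • r) := by rw [h2]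
        _ = c - (2:ℝ)⁻¹ • r := by abel
    have he1 : eLpNorm (fun x => κ x (x - r)) w volume
        = eLpNorm (fun c => κ (c + (2:ℝ)⁻¹ • r) (c - (2:ℝ)⁻¹ • r)) w volume := by
      rw [← eLpNorm_comp_measurePreserving (hm1 r).aestronglyMeasurable ht]
      refine eLpNorm_congr_ae (Filter.Eventually.of_forall fun c => ?_)
      show κ (c + (2:ℝ)⁻¹ • r) (c + (2:ℝ)⁻¹ • r - r) = _
      rw [hsub c]
    have he2 : eLpNorm (fun x => κ' (x - r) x) w' volume
        = eLpNorm (fun c => κ' (c - (2:ℝ)⁻¹ • r) (c + (2:ℝ)⁻¹ • r)) w' volume := by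
      rw [← eLpNorm_comp_measurePreserving (hm2 r).aestronglyMeasurable ht]
      refine eLpNorm_congr_ae (Filter.Eventually.of_forall fun c => ?_)
      show κ' (c + (2:ℝ)⁻¹ • r - r) (c + (2:ℝ)⁻¹ • r) = _
      rw [hsub c]
    rw [← he1, ← he2]
    exact hHolder
  -- measurability of the combined kernel
  have hHm : Measurable (Function.uncurry fun x rr : EuclideanSpace ℝ (Fin d) =>
      ((‖κ x (x - rr)‖₊ : ℝ≥0∞)) * ((‖κ' (x - rr) x‖₊ : ℝ≥0∞))) := by
    have a1 : Measurable fun p : EuclideanSpace ℝ (Fin d) × EuclideanSpace ℝ (Fin d) =>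
        κ p.1 (p.1 - p.2) := hκ.comp (measurable_fst.prodMk (measurable_fst.sub measurable_snd))
    have a2 : Measurable fun p : EuclideanSpace ℝ (Fin d) × EuclideanSpace ℝ (Fin d) =>
        κ' (p.1 - p.2) p.1 := hκ'.comp ((measurable_fst.sub measurable_snd).prodMk measurable_fst)
    exact a1.enorm.mul a2.enorm
  -- pointwise bound on the density
  have hρ : ∀ x : EuclideanSpace ℝ (Fin d), ((‖∫ y, κ x y * κ' y x‖₊ : ℝ≥0∞)) ≤
      ∫⁻ rr, ((‖κ x (x - rr)‖₊ : ℝ≥0∞)) * ((‖κ' (x - rr) x‖₊ : ℝ≥0∞)) ∂volume := by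
    intro x
    have h1 : ((‖∫ y, κ x y * κ' y x‖₊ : ℝ≥0∞)) ≤
        ∫⁻ y, ((‖κ x y * κ' y x‖₊ : ℝ≥0∞)) ∂volume :=
      enorm_integral_le_lintegral_enorm _
    have hgm : Measurable fun y => ((‖κ x y * κ' y x‖₊ : ℝ≥0∞)) := by
      have : Measurable fun y => ‖κ x y * κ' y x‖ₑ := Measurable.enorm ((hκ.comp (measurable_const.prodMk measurable_id)).mul
        (hκ'.comp (measurable_id.prodMk measurable_const)))
      exact this
    have h2 : ∫⁻ y, ((‖κ x y * κ' y x‖₊ : ℝ≥0∞)) ∂volume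
        = ∫⁻ rr, ((‖κ x (x - rr) * κ' (x - rr) x‖₊ : ℝ≥0∞)) ∂volume :=
      ((Measure.measurePreserving_sub_left volume x).lintegral_comp hgm).symm
    refine h1.trans (le_of_eq (h2.trans ?_))
    refine lintegral_congr fun rr => ?_
    rw [nnnorm_mul, ENNReal.coe_mul]
  -- first inequality
  have part1 : eLpNorm (fun x => ∫ y, κ x y * κ' y x) q volume ≤
      ∫⁻ r, eLpNorm (fun c => κ (c + (2:ℝ)⁻¹ • r) (c - (2:ℝ)⁻¹ • r)) w volume *
        eLpNorm (fun c => κ' (c - (2:ℝ)⁻¹ • r) (c + (2:ℝ)⁻¹ • r)) w' volume := by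
    have hmain : eLpNorm (fun x => ∫ y, κ x y * κ' y x) q volume ≤
        ∫⁻ r, eLpNorm (fun x => κ x (x - r) * κ' (x - r) x) q volume := by
      rcases eq_or_ne q ∞ with rfl | hqtop
      · rw [eLpNorm_exponent_top, eLpNormEssSup]
        calc essSup (fun x => ((‖∫ y, κ x y * κ' y x‖₊ : ℝ≥0∞))) volume
            ≤ essSup (fun x => ∫⁻ rr, ((‖κ x (x - rr)‖₊ : ℝ≥0∞)) *
                ((‖κ' (x - rr) x‖₊ : ℝ≥0∞)) ∂volume) volume :=
              essSup_mono_ae (Filter.Eventually.of_forall hρ)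
          _ ≤ ∫⁻ rr, essSup (fun x => ((‖κ x (x - rr)‖₊ : ℝ≥0∞)) *
                ((‖κ' (x - rr) x‖₊ : ℝ≥0∞))) volume ∂volume :=
              essSup_lintegral_le volume volume hHm
          _ = ∫⁻ rr, eLpNorm (fun x => κ x (x - rr) * κ' (x - rr) x) ⊤ volume ∂volume := by
              refine lintegral_congr fun rr => ?_
              rw [eLpNorm_exponent_top, eLpNormEssSup]
              refine essSup_congr_ae (Filter.Eventually.of_forall fun x => ?_)
              exact (enorm_mul _ _).symm
      · have hqt : 1 ≤ q.toReal := by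
          rw [← ENNReal.toReal_one]
          exact ENNReal.toReal_mono hqtop hq
        rw [eLpNorm_eq_lintegral_rpow_enorm_toReal hq0 hqtop]
        have hqt0 : (0:ℝ) < q.toReal := lt_of_lt_of_le one_pos hqt
        calc (∫⁻ x, ((‖∫ y, κ x y * κ' y x‖₊ : ℝ≥0∞)) ^ q.toReal ∂volume) ^ (1/q.toReal)
            ≤ (∫⁻ x, (∫⁻ rr, ((‖κ x (x - rr)‖₊ : ℝ≥0∞)) *
                ((‖κ' (x - rr) x‖₊ : ℝ≥0∞)) ∂volume) ^ q.toReal ∂volume) ^ (1/q.toReal) := by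
              refine ENNReal.rpow_le_rpow ?_ (by positivity)
              exact lintegral_mono fun x => ENNReal.rpow_le_rpow (hρ x) hqt0.le
          _ ≤ ∫⁻ rr, (∫⁻ x, (((‖κ x (x - rr)‖₊ : ℝ≥0∞)) *
                ((‖κ' (x - rr) x‖₊ : ℝ≥0∞))) ^ q.toReal ∂volume) ^ (1/q.toReal) ∂volume :=
              lintegral_minkowski volume volume hqt hHm
          _ = ∫⁻ rr, eLpNorm (fun x => κ x (x - rr) * κ' (x - rr) x) q volume ∂volume := by
              refine lintegral_congr fun rr => ?_
              rw [eLpNorm_eq_lintegral_rpow_enorm_toReal hq0 hqtop]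
              congr 1
              refine lintegral_congr fun x => ?_
              exact congrArg (· ^ q.toReal) (enorm_mul _ _).symm
    exact hmain.trans (lintegral_mono hstep)
  refine ⟨part1, ?_⟩
  -- second inequality: Cauchy-Schwarz in r
  have hAm : Measurable fun r => eLpNorm
      (fun c => κ (c + (2:ℝ)⁻¹ • r) (c - (2:ℝ)⁻¹ • r)) w volume := by
    refine measurable_eLpNorm_param volume
      (f := fun c r => κ (c + (2:ℝ)⁻¹ • r) (c - (2:ℝ)⁻¹ • r)) ?_ w
    exact hκ.comp ((measurable_fst.add (measurable_snd.const_smul (2:ℝ)⁻¹)).prodMk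
      (measurable_fst.sub (measurable_snd.const_smul (2:ℝ)⁻¹)))
  have hA'm : Measurable fun r => eLpNorm
      (fun c => κ (c - (2:ℝ)⁻¹ • r) (c + (2:ℝ)⁻¹ • r)) w volume := by
    refine measurable_eLpNorm_param volume
      (f := fun c r => κ (c - (2:ℝ)⁻¹ • r) (c + (2:ℝ)⁻¹ • r)) ?_ w
    exact hκ.comp ((measurable_fst.sub (measurable_snd.const_smul (2:ℝ)⁻¹)).prodMk
      (measurable_fst.add (measurable_snd.const_smul (2:ℝ)⁻¹)))
  have hB'm : Measurable fun r => eLpNorm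
      (fun c => κ' (c - (2:ℝ)⁻¹ • r) (c + (2:ℝ)⁻¹ • r)) w' volume := by
    refine measurable_eLpNorm_param volume
      (f := fun c r => κ' (c - (2:ℝ)⁻¹ • r) (c + (2:ℝ)⁻¹ • r)) ?_ w'
    exact hκ'.comp ((measurable_fst.sub (measurable_snd.const_smul (2:ℝ)⁻¹)).prodMk
      (measurable_fst.add (measurable_snd.const_smul (2:ℝ)⁻¹)))
  have hCS := ENNReal.lintegral_mul_le_Lp_mul_Lq (volume : Measure (EuclideanSpace ℝ (Fin d)))
    Real.HolderConjugate.two_two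
    hAm.aemeasurable hB'm.aemeasurable
  have hpow : ∀ x : ℝ≥0∞, x ^ (2:ℝ) = x ^ (2:ℕ) := fun x => by
    rw [← ENNReal.rpow_natCast x 2]; norm_num
  have hneg : ∫⁻ r, (eLpNorm (fun c => κ (c + (2:ℝ)⁻¹ • r) (c - (2:ℝ)⁻¹ • r)) w volume) ^ (2:ℝ)
      = ∫⁻ r, (eLpNorm (fun c => κ (c - (2:ℝ)⁻¹ • r) (c + (2:ℝ)⁻¹ • r)) w volume) ^ (2:ℝ) := by
    have hcomp := (Measure.measurePreserving_neg
      (volume : Measure (EuclideanSpace ℝ (Fin d)))).lintegral_comp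
      ((hA'm.pow_const (2:ℝ)))
    calc ∫⁻ r, (eLpNorm (fun c => κ (c + (2:ℝ)⁻¹ • r) (c - (2:ℝ)⁻¹ • r)) w volume) ^ (2:ℝ)
        = ∫⁻ r, (eLpNorm (fun c => κ (c - (2:ℝ)⁻¹ • (-r)) (c + (2:ℝ)⁻¹ • (-r))) w volume)
            ^ (2:ℝ) := by
          refine lintegral_congr fun r => ?_
          congr 1
          refine eLpNorm_congr_ae (Filter.Eventually.of_forall fun c => ?_)
          simp [smul_neg, sub_eq_add_neg]
      _ = ∫⁻ r, (eLpNorm (fun c => κ (c - (2:ℝ)⁻¹ • r) (c + (2:ℝ)⁻¹ • r)) w volume) ^ (2:ℝ) :=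
          hcomp
  calc (∫⁻ r, eLpNorm (fun c => κ (c + (2:ℝ)⁻¹ • r) (c - (2:ℝ)⁻¹ • r)) w volume *
        eLpNorm (fun c => κ' (c - (2:ℝ)⁻¹ • r) (c + (2:ℝ)⁻¹ • r)) w' volume)
      ≤ (∫⁻ r, (eLpNorm (fun c => κ (c + (2:ℝ)⁻¹ • r) (c - (2:ℝ)⁻¹ • r)) w volume) ^ (2:ℝ))
          ^ (1/2 : ℝ) *
        (∫⁻ r, (eLpNorm (fun c => κ' (c - (2:ℝ)⁻¹ • r) (c + (2:ℝ)⁻¹ • r)) w' volume) ^ (2:ℝ))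
          ^ (1/2 : ℝ) := hCS
    _ = (∫⁻ r, (eLpNorm (fun c => κ (c - (2:ℝ)⁻¹ • r) (c + (2:ℝ)⁻¹ • r)) w volume) ^ 2)
          ^ (1/2 : ℝ) *
        (∫⁻ r, (eLpNorm (fun c => κ' (c - (2:ℝ)⁻¹ • r) (c + (2:ℝ)⁻¹ • r)) w' volume) ^ 2)
          ^ (1/2 : ℝ) := by
        rw [hneg]
        simp_rw [hpow]
end

section
/- Let f ∈ L^p(ℝ^d) and let κ be a Hilbert–Schmidt operator on L^2(ℝ^d) with kernel κ(x,y). Then the Hilbert–Schmidt norm of the operator f·κ (composition of multiplication by f with κ) satisfies ‖fκ‖_{I^2} ≤ ‖f‖_{L^p} ‖κ‖_{L^2_r L^s_c}, whenever 1/p + 1/s = 1/2. -/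
set_option maxHeartbeats 1000000

open MeasureTheory
open scoped ENNReal

lemma sq_eLpNorm_two {α : Type*} [MeasurableSpace α] {μ : Measure α}
    {G : Type*} [NormedAddCommGroup G] (g : α → G) :
    (eLpNorm g 2 μ) ^ (2:ℝ) = ∫⁻ a, (‖g a‖₊ : ℝ≥0∞) ^ (2:ℝ) ∂μ := by
  rw [eLpNorm_eq_lintegral_rpow_enorm_toReal two_ne_zero ENNReal.ofNat_ne_top, ← ENNReal.rpow_mul]
  norm_num
  rfl

/-- If `∫⁻ r, ‖K r‖_s ^ 2 = 0` then `K r = 0` a.e. for a.e. `r`. -/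
lemma aux_ae_zero {d : ℕ} (K : EuclideanSpace ℝ (Fin d) → EuclideanSpace ℝ (Fin d) → ℂ)
    (hK : Measurable (Function.uncurry K)) (s : ℝ≥0∞) (hs : s ≠ 0)
    (hX : (∫⁻ r, (eLpNorm (K r) s volume) ^ (2:ℝ)) = 0) :
    ∀ᵐ r, ∀ᵐ c, K r c = 0 := by
  have hKr : ∀ r, Measurable (K r) := fun r => by exact hK.comp measurable_prodMk_left
  set v : ℕ → EuclideanSpace ℝ (Fin d) → ℝ≥0∞ :=
    fun m r => volume {c | ((m + 1 : ℕ) : ℝ≥0∞)⁻¹ ≤ (‖K r c‖₊ : ℝ≥0∞)} with hv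
  have hvm : ∀ m, Measurable (v m) := by
    intro m
    have hS : MeasurableSet {q : EuclideanSpace ℝ (Fin d) × EuclideanSpace ℝ (Fin d) |
        ((m + 1 : ℕ) : ℝ≥0∞)⁻¹ ≤ (‖Function.uncurry K q‖₊ : ℝ≥0∞)} :=
      measurableSet_le measurable_const hK.enorm
    exact measurable_measure_prodMk_left (ν := volume) hS
  have hεne : ∀ m : ℕ, ((m + 1 : ℕ) : ℝ≥0∞)⁻¹ ≠ 0 := by
    intro m; simp [ENNReal.inv_ne_zero]
  have key : ∀ m, ∀ᵐ r, v m r = 0 := by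
    intro m
    set ε : ℝ≥0∞ := ((m + 1 : ℕ) : ℝ≥0∞)⁻¹ with hε
    have hεtop : ε ≠ ⊤ := by simp [hε]
    by_cases hstop : s = ⊤
    · subst hstop
      have hle : ∀ r, ε ^ (2:ℝ) * min (v m r) 1 ≤ (eLpNorm (K r) ⊤ volume) ^ (2:ℝ) := by
        intro r
        rcases eq_or_ne (v m r) 0 with h0 | h0
        · simp [h0]
        · have hεN : ε ≤ eLpNorm (K r) ⊤ volume := by
            by_contra hlt
            push_neg at hlt
            rw [eLpNorm_exponent_top] at hlt
            refine h0 (measure_mono_null ?_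
              (ae_iff.mp (enorm_ae_le_eLpNormEssSup (K r) volume)))
            intro c hc
            simp only [Set.mem_setOf_eq] at hc ⊢
            intro hcle
            exact absurd (hc.trans hcle) (not_le.mpr hlt)
          calc ε ^ (2:ℝ) * min (v m r) 1 ≤ ε ^ (2:ℝ) * 1 := by gcongr; exact min_le_right _ _
            _ = ε ^ (2:ℝ) := mul_one _
            _ ≤ (eLpNorm (K r) ⊤ volume) ^ (2:ℝ) := ENNReal.rpow_le_rpow hεN (by norm_num)
      have h1 : (∫⁻ r, ε ^ (2:ℝ) * min (v m r) 1) = 0 :=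
        le_antisymm ((lintegral_mono hle).trans hX.le) zero_le
      have hwm : Measurable fun r => ε ^ (2:ℝ) * min (v m r) 1 :=
        ((hvm m).min measurable_const).const_mul _
      have h2 := (lintegral_eq_zero_iff hwm).mp h1
      filter_upwards [h2] with r hr
      have hε2 : ε ^ (2:ℝ) ≠ 0 := by
        simp [ENNReal.rpow_eq_zero_iff, hεne m]; exact hεne m
      rcases mul_eq_zero.mp hr with h | h
      · exact absurd h hε2
      · by_contra hvne
        have : (0:ℝ≥0∞) < min (v m r) 1 := lt_min (pos_iff_ne_zero.mpr hvne) one_pos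
        exact this.ne' h
    · have hsR : 0 < s.toReal := ENNReal.toReal_pos hs hstop
      have cheb : ∀ r, ε ^ s.toReal * v m r ≤ (eLpNorm (K r) s volume) ^ s.toReal := fun r =>
        mul_meas_ge_le_pow_eLpNorm' volume hs hstop (hKr r).aestronglyMeasurable ε
      have hle : ∀ r, (ε ^ s.toReal * v m r) ^ (2 / s.toReal)
          ≤ (eLpNorm (K r) s volume) ^ (2:ℝ) := by
        intro r
        calc (ε ^ s.toReal * v m r) ^ (2 / s.toReal)
            ≤ ((eLpNorm (K r) s volume) ^ s.toReal) ^ (2 / s.toReal) :=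
              ENNReal.rpow_le_rpow (cheb r) (by positivity)
          _ = (eLpNorm (K r) s volume) ^ (s.toReal * (2 / s.toReal)) :=
              (ENNReal.rpow_mul _ _ _).symm
          _ = (eLpNorm (K r) s volume) ^ (2:ℝ) := by rw [mul_div_cancel₀ _ hsR.ne']
      have h1 : (∫⁻ r, (ε ^ s.toReal * v m r) ^ (2 / s.toReal)) = 0 :=
        le_antisymm ((lintegral_mono hle).trans hX.le) zero_le
      have hwm : Measurable fun r => (ε ^ s.toReal * v m r) ^ (2 / s.toReal) :=
        (ENNReal.continuous_rpow_const.measurable).comp ((hvm m).const_mul _)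
      have h2 := (lintegral_eq_zero_iff hwm).mp h1
      filter_upwards [h2] with r hr
      have h3 : ε ^ s.toReal * v m r = 0 :=
        (ENNReal.rpow_eq_zero_iff_of_pos (by positivity)).mp hr
      rcases mul_eq_zero.mp h3 with h | h
      · exact absurd h (by simp [ENNReal.rpow_eq_zero_iff, hεne m, hεtop, not_lt.mpr hsR.le]; exact fun h0 => absurd h0 (hεne m))
      · exact h
  have hall : ∀ᵐ r, ∀ m, v m r = 0 := ae_all_iff.mpr key
  filter_upwards [hall] with r hr
  rw [ae_iff]
  refine measure_mono_null ?_ (measure_iUnion_null (fun m => hr m))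
  intro c hc
  simp only [Set.mem_setOf_eq] at hc
  have hpos : (0:ℝ≥0∞) < (‖K r c‖₊ : ℝ≥0∞) := by
    simpa [pos_iff_ne_zero] using hc
  obtain ⟨n, hn⟩ := ENNReal.exists_inv_nat_lt hpos.ne'
  refine Set.mem_iUnion.mpr ⟨n, ?_⟩
  simp only [hv, Set.mem_setOf_eq]
  refine le_trans ?_ hn.le
  exact ENNReal.inv_le_inv.mpr (by exact_mod_cast Nat.le_succ n)

/-- Change of variables `(x, y) = (c - r/2, c + r/2)` for a double `lintegral`. -/
lemma chain_lemma {d : ℕ}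
    (G : EuclideanSpace ℝ (Fin d) × EuclideanSpace ℝ (Fin d) → ℝ≥0∞) (hG : Measurable G) :
    (∫⁻ z, G z ∂((volume : Measure (EuclideanSpace ℝ (Fin d))).prod volume))
      = ∫⁻ r, ∫⁻ c, G (c - (2:ℝ)⁻¹ • r, c + (2:ℝ)⁻¹ • r) := by
  rw [lintegral_prod G hG.aemeasurable]
  have step1 : ∀ x, (∫⁻ y, G (x, y)) = ∫⁻ r, G (x, x + r) := fun x =>
    ((measurePreserving_add_left volume x).lintegral_comp
      (hG.comp measurable_prodMk_left)).symm
  have hG2 : Measurable fun z : EuclideanSpace ℝ (Fin d) × EuclideanSpace ℝ (Fin d) =>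
      G (z.1, z.1 + z.2) :=
    hG.comp (measurable_fst.prodMk (measurable_fst.add measurable_snd))
  have swap : (∫⁻ x, ∫⁻ r, G (x, x + r)) = ∫⁻ r, ∫⁻ x, G (x, x + r) :=
    lintegral_lintegral_swap hG2.aemeasurable
  have step2 : ∀ r, (∫⁻ x, G (x, x + r))
      = ∫⁻ c, G (c - (2:ℝ)⁻¹ • r, c + (2:ℝ)⁻¹ • r) := by
    intro r
    have hmp := measurePreserving_sub_right
      (volume : Measure (EuclideanSpace ℝ (Fin d))) ((2:ℝ)⁻¹ • r)
    have hm : Measurable fun x : EuclideanSpace ℝ (Fin d) => G (x, x + r) :=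
      hG.comp (measurable_id.prodMk (measurable_id.add_const _))
    have hcomp := hmp.lintegral_comp (f := fun x => G (x, x + r)) hm
    refine hcomp.symm.trans (lintegral_congr fun c => ?_)
    show G (c - (2:ℝ)⁻¹ • r, c - (2:ℝ)⁻¹ • r + r) = _
    rw [show c - (2:ℝ)⁻¹ • r + r = c + (2:ℝ)⁻¹ • r from by module]
  rw [lintegral_congr step1, swap, lintegral_congr step2]

/-- `‖f κ‖_{I²} ≤ ‖f‖_{L^p} ‖κ‖_{L^2_r L^s_c}` when `1/p + 1/s = 1/2`, where
`(fκ)(x,y) = f(x) κ(x,y)` and the Hilbert-Schmidt norm is the `L²` norm of the kernel. -/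
theorem stmt_3 (d : ℕ) (f : EuclideanSpace ℝ (Fin d) → ℂ)
    (κ : EuclideanSpace ℝ (Fin d) → EuclideanSpace ℝ (Fin d) → ℂ)
    (hf : Measurable f) (hκ : Measurable (Function.uncurry κ))
    (p s : ℝ≥0∞) (hp : 1 ≤ p) (hs : 1 ≤ s) (hps : 1 / p + 1 / s = 1 / 2) :
    eLpNorm (fun z : EuclideanSpace ℝ (Fin d) × EuclideanSpace ℝ (Fin d) =>
        f z.1 * κ z.1 z.2) 2 (volume.prod volume) ≤
      eLpNorm f p volume *
        (∫⁻ r, (eLpNorm (fun c => κ (c - (2:ℝ)⁻¹ • r) (c + (2:ℝ)⁻¹ • r)) s volume) ^ 2) ^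
          (1/2 : ℝ) := by
  have hFm : Measurable fun z : EuclideanSpace ℝ (Fin d) × EuclideanSpace ℝ (Fin d) =>
      f z.1 * κ z.1 z.2 := (hf.comp measurable_fst).mul hκ
  have hL : Measurable fun q : EuclideanSpace ℝ (Fin d) × EuclideanSpace ℝ (Fin d) =>
      ((q.2 - (2:ℝ)⁻¹ • q.1, q.2 + (2:ℝ)⁻¹ • q.1) :
        EuclideanSpace ℝ (Fin d) × EuclideanSpace ℝ (Fin d)) :=
    (measurable_snd.sub (measurable_fst.const_smul (2:ℝ)⁻¹)).prodMk
      (measurable_snd.add (measurable_fst.const_smul (2:ℝ)⁻¹))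
  have hKm : Measurable (Function.uncurry fun r c : EuclideanSpace ℝ (Fin d) =>
      κ (c - (2:ℝ)⁻¹ • r) (c + (2:ℝ)⁻¹ • r)) := by exact hκ.comp hL
  have hg : Measurable fun z : EuclideanSpace ℝ (Fin d) × EuclideanSpace ℝ (Fin d) =>
      (‖f z.1 * κ z.1 z.2‖₊ : ℝ≥0∞) ^ (2:ℝ) :=
    ENNReal.continuous_rpow_const.measurable.comp hFm.enorm
  have chain := chain_lemma
    (fun z : EuclideanSpace ℝ (Fin d) × EuclideanSpace ℝ (Fin d) =>
      (‖f z.1 * κ z.1 z.2‖₊ : ℝ≥0∞) ^ (2:ℝ)) hg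
  have chain2 : (∫⁻ z : EuclideanSpace ℝ (Fin d) × EuclideanSpace ℝ (Fin d),
        (‖f z.1 * κ z.1 z.2‖₊ : ℝ≥0∞) ^ (2:ℝ) ∂(volume.prod volume))
      = ∫⁻ r, ∫⁻ c, (‖f (c - (2:ℝ)⁻¹ • r) *
          κ (c - (2:ℝ)⁻¹ • r) (c + (2:ℝ)⁻¹ • r)‖₊ : ℝ≥0∞) ^ (2:ℝ) :=
    chain.trans (lintegral_congr fun r => lintegral_congr fun c => rfl)
  -- per-r Hölder estimate
  have hold : ∀ r : EuclideanSpace ℝ (Fin d),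
      (∫⁻ c, (‖f (c - (2:ℝ)⁻¹ • r) *
          κ (c - (2:ℝ)⁻¹ • r) (c + (2:ℝ)⁻¹ • r)‖₊ : ℝ≥0∞) ^ (2:ℝ))
      ≤ (eLpNorm f p volume *
          eLpNorm (fun c => κ (c - (2:ℝ)⁻¹ • r) (c + (2:ℝ)⁻¹ • r)) s volume) ^ (2:ℝ) := by
    intro r
    rw [← sq_eLpNorm_two]
    refine ENNReal.rpow_le_rpow ?_ (by norm_num)
    have hφ : Measurable fun c : EuclideanSpace ℝ (Fin d) => f (c - (2:ℝ)⁻¹ • r) :=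
      hf.comp (measurable_id.sub_const _)
    have hψ : Measurable fun c : EuclideanSpace ℝ (Fin d) =>
        κ (c - (2:ℝ)⁻¹ • r) (c + (2:ℝ)⁻¹ • r) := by
      have h := hκ.comp ((measurable_id.sub_const ((2:ℝ)⁻¹ • r)).prodMk
        (measurable_id.add_const ((2:ℝ)⁻¹ • r)))
      exact h
    haveI : ENNReal.HolderTriple p s 2 := ⟨by simpa [one_div] using hps⟩
    have hH := eLpNorm_le_eLpNorm_mul_eLpNorm_of_nnnorm (μ := volume) (p := p) (q := s) (r := 2)
      hφ.aestronglyMeasurable hψ.aestronglyMeasurable (· * ·) 1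
      (Filter.Eventually.of_forall fun c => by rw [one_mul]; exact (nnnorm_mul _ _).le)
    rw [ENNReal.coe_one, one_mul] at hH
    refine hH.trans (mul_le_mul' (le_of_eq ?_) le_rfl)
    have htr := eLpNorm_comp_measurePreserving (p := p) hf.aestronglyMeasurable
      (measurePreserving_sub_right (volume : Measure (EuclideanSpace ℝ (Fin d)))
        ((2:ℝ)⁻¹ • r))
    simpa [Function.comp_def] using htr
  -- rewrite the LHS
  rw [eLpNorm_eq_lintegral_rpow_enorm_toReal two_ne_zero ENNReal.ofNat_ne_top]
  simp only [ENNReal.toReal_ofNat, enorm_eq_nnnorm]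
  rw [chain2]
  -- rewrite ℕ-pow as rpow on the RHS
  have hpow2 : ∀ y : ℝ≥0∞, y ^ (2:ℕ) = y ^ (2:ℝ) := fun y => by
    rw [← ENNReal.rpow_natCast]; norm_num
  simp only [hpow2]
  by_cases hX : (∫⁻ r, (eLpNorm (fun c => κ (c - (2:ℝ)⁻¹ • r) (c + (2:ℝ)⁻¹ • r)) s volume)
      ^ (2:ℝ)) = 0
  · have hs0 : s ≠ 0 := (zero_lt_one.trans_le hs).ne'
    have hae := aux_ae_zero (fun r c => κ (c - (2:ℝ)⁻¹ • r) (c + (2:ℝ)⁻¹ • r)) hKm s hs0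
      (by exact hX)
    have hz : (∫⁻ r, ∫⁻ c, (‖f (c - (2:ℝ)⁻¹ • r) *
        κ (c - (2:ℝ)⁻¹ • r) (c + (2:ℝ)⁻¹ • r)‖₊ : ℝ≥0∞) ^ (2:ℝ)) = 0 := by
      have hz1 : ∀ᵐ r : EuclideanSpace ℝ (Fin d), (∫⁻ c, (‖f (c - (2:ℝ)⁻¹ • r) *
          κ (c - (2:ℝ)⁻¹ • r) (c + (2:ℝ)⁻¹ • r)‖₊ : ℝ≥0∞) ^ (2:ℝ)) = 0 := by
        filter_upwards [hae] with r hr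
        have hz2 : (∫⁻ c, (‖f (c - (2:ℝ)⁻¹ • r) *
            κ (c - (2:ℝ)⁻¹ • r) (c + (2:ℝ)⁻¹ • r)‖₊ : ℝ≥0∞) ^ (2:ℝ))
            = ∫⁻ _c : EuclideanSpace ℝ (Fin d), 0 := by
          refine lintegral_congr_ae ?_
          filter_upwards [hr] with c hc
          simp [hc, ENNReal.zero_rpow_of_pos]
        simpa using hz2
      calc (∫⁻ r, ∫⁻ c, (‖f (c - (2:ℝ)⁻¹ • r) *
            κ (c - (2:ℝ)⁻¹ • r) (c + (2:ℝ)⁻¹ • r)‖₊ : ℝ≥0∞) ^ (2:ℝ))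
          = ∫⁻ _r : EuclideanSpace ℝ (Fin d), 0 := lintegral_congr_ae hz1
        _ = 0 := lintegral_zero
    rw [hz]
    simp [ENNReal.zero_rpow_of_pos]
  · by_cases hC : eLpNorm f p volume = ⊤
    · have hXne : ((∫⁻ r, (eLpNorm (fun c => κ (c - (2:ℝ)⁻¹ • r) (c + (2:ℝ)⁻¹ • r)) s volume)
          ^ (2:ℝ)) ^ (1/2 : ℝ)) ≠ 0 := by
        intro h
        exact hX ((ENNReal.rpow_eq_zero_iff_of_pos (by norm_num)).mp h)
      rw [hC, ENNReal.top_mul hXne]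
      exact le_top
    · calc (∫⁻ r, ∫⁻ c, (‖f (c - (2:ℝ)⁻¹ • r) *
            κ (c - (2:ℝ)⁻¹ • r) (c + (2:ℝ)⁻¹ • r)‖₊ : ℝ≥0∞) ^ (2:ℝ)) ^ (1/2 : ℝ)
          ≤ (∫⁻ r, (eLpNorm f p volume *
              eLpNorm (fun c => κ (c - (2:ℝ)⁻¹ • r) (c + (2:ℝ)⁻¹ • r)) s volume) ^ (2:ℝ))
            ^ (1/2 : ℝ) := ENNReal.rpow_le_rpow (lintegral_mono hold) (by norm_num)
        _ = ((eLpNorm f p volume) ^ (2:ℝ) *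
            ∫⁻ r, (eLpNorm (fun c => κ (c - (2:ℝ)⁻¹ • r) (c + (2:ℝ)⁻¹ • r)) s volume)
              ^ (2:ℝ)) ^ (1/2 : ℝ) := by
            congr 1
            rw [← lintegral_const_mul' _ _ (ENNReal.rpow_ne_top_of_nonneg (by norm_num) hC)]
            refine lintegral_congr fun r => ?_
            rw [ENNReal.mul_rpow_of_nonneg _ _ (by norm_num : (0:ℝ) ≤ 2)]
        _ = eLpNorm f p volume *
            (∫⁻ r, (eLpNorm (fun c => κ (c - (2:ℝ)⁻¹ • r) (c + (2:ℝ)⁻¹ • r)) s volume)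
              ^ (2:ℝ)) ^ (1/2 : ℝ) := by
            rw [ENNReal.mul_rpow_of_nonneg _ _ (by norm_num : (0:ℝ) ≤ 1/2),
              ← ENNReal.rpow_mul]
            norm_num
end
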